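/- With the hypotheses and definitions of the previous iteration scheme, the pointwise limit φ(t) = lim_{n→∞} φ_n(t) exists for each t ∈ [T₁,T], satisfies the integral equation φ(t) = M ∫ₜᵀ ρ(s, φ(s)) ds on [T₁,T] (by monotone convergence and the continuity of the concave function ρ(s,·)), and therefore φ ≡ 0 on [T₁,T] by the uniqueness assumption on the ODE u' = −Mρ(t,u), u(T)=0. -/

import Mathlib

open Set intervalIntegral Filter MeasureTheory

/-- The non-increasing Picard iterates `φ_n` converge pointwise on `[T₁,T]` to a
limit `φ` which satisfies the integral equation `φ(t) = M∫ₜᵀ ρ(s,φ(s))ds`, and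
hence `φ ≡ 0` on `[T₁,T]` by the uniqueness assumption on the ODE
`u' = -Mρ(t,u), u(T) = 0`. -/
theorem picard_iterates_tendsto_zero (T T₁ M M₁ : ℝ) (hT₁ : 0 ≤ T₁) (hT : T₁ ≤ T)
    (hM : 0 < M) (hM₁ : 0 ≤ M₁)
    (ρ : ℝ → ℝ → ℝ)
    (hconc : ∀ t ∈ Icc (0 : ℝ) T, ConcaveOn ℝ (Ici (0 : ℝ)) (ρ t))
    (hmono : ∀ t ∈ Icc (0 : ℝ) T, MonotoneOn (ρ t) (Ici (0 : ℝ)))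
    (hzero : ∀ t ∈ Icc (0 : ℝ) T, ρ t 0 = 0)
    (hnonneg : ∀ t ∈ Icc (0 : ℝ) T, ∀ u, 0 ≤ u → 0 ≤ ρ t u)
    (hintu : ∀ u : ℝ, 0 ≤ u → IntervalIntegrable (fun s => ρ s u) MeasureTheory.volume 0 T)
    (huniq : ∀ u : ℝ → ℝ, (∀ t ∈ Icc (0 : ℝ) T, HasDerivAt u (-(M * ρ t (u t))) t) →
        u T = 0 → ∀ t ∈ Icc (0 : ℝ) T, u t = 0)
    (φ : ℕ → ℝ → ℝ)
    (hφ0 : ∀ t, φ 0 t = M * ∫ s in t..T, ρ s M₁)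
    (hφsucc : ∀ n t, φ (n + 1) t = M * ∫ s in t..T, ρ s (φ n s))
    (hφint : ∀ n, ∀ t ∈ Icc T₁ T, IntervalIntegrable (fun s => ρ s (φ n s))
        MeasureTheory.volume t T)
    (hφnonneg : ∀ n, ∀ t ∈ Icc T₁ T, 0 ≤ φ n t)
    (hφanti : ∀ t ∈ Icc T₁ T, Antitone (fun n => φ n t))
    (huniq' : ∀ u : ℝ → ℝ, (∀ t ∈ Icc T₁ T, 0 ≤ u t) →
        (∀ t ∈ Icc T₁ T, u t = M * ∫ s in t..T, ρ s (u s)) →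
        ∀ t ∈ Icc T₁ T, u t = 0) :
    ∃ φlim : ℝ → ℝ,
      (∀ t ∈ Icc T₁ T, Tendsto (fun n => φ n t) atTop (nhds (φlim t))) ∧
      (∀ t ∈ Icc T₁ T, φlim t = M * ∫ s in t..T, ρ s (φlim s)) ∧
      (∀ t ∈ Icc T₁ T, φlim t = 0) := by
  have hIsub : Icc T₁ T ⊆ Icc (0 : ℝ) T := Icc_subset_Icc hT₁ le_rfl
  set ψ : ℝ → ℝ := fun t => ⨅ n, φ n t with hψdef
  set g : ℝ → ℝ := fun s => ⨅ n, ρ s (φ n s) with hgdef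
  have hbdd : ∀ t ∈ Icc T₁ T, BddBelow (range fun n => φ n t) := by
    intro t ht
    exact ⟨0, by rintro x ⟨n, rfl⟩; exact hφnonneg n t ht⟩
  have htend : ∀ t ∈ Icc T₁ T, Tendsto (fun n => φ n t) atTop (nhds (ψ t)) := fun t ht =>
    tendsto_atTop_ciInf (hφanti t ht) (hbdd t ht)
  have hψ_nonneg : ∀ t ∈ Icc T₁ T, 0 ≤ ψ t := fun t ht => le_ciInf fun n => hφnonneg n t ht
  have hψ_le : ∀ t ∈ Icc T₁ T, ∀ n, ψ t ≤ φ n t := fun t ht n => ciInf_le (hbdd t ht) n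
  have hρanti : ∀ s ∈ Icc T₁ T, Antitone (fun n => ρ s (φ n s)) := fun s hs m n h =>
    hmono s (hIsub hs) (hφnonneg n s hs) (hφnonneg m s hs) (hφanti s hs h)
  have hρnn : ∀ s ∈ Icc T₁ T, ∀ n, 0 ≤ ρ s (φ n s) := fun s hs n =>
    hnonneg s (hIsub hs) _ (hφnonneg n s hs)
  have hρbdd : ∀ s ∈ Icc T₁ T, BddBelow (range fun n => ρ s (φ n s)) := by
    intro s hs
    exact ⟨0, by rintro x ⟨n, rfl⟩; exact hρnn s hs n⟩
  have hgtend : ∀ s ∈ Icc T₁ T, Tendsto (fun n => ρ s (φ n s)) atTop (nhds (g s)) := fun s hs =>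
    tendsto_atTop_ciInf (hρanti s hs) (hρbdd s hs)
  have hg_nonneg : ∀ s ∈ Icc T₁ T, 0 ≤ g s := fun s hs => le_ciInf fun n => hρnn s hs n
  have hg_le : ∀ s ∈ Icc T₁ T, ∀ n, g s ≤ ρ s (φ n s) := fun s hs n => ciInf_le (hρbdd s hs) n
  -- measurability and integrability of g
  have hIoc_sub : ∀ t ∈ Icc T₁ T, Ioc t T ⊆ Icc T₁ T := fun t ht s hs =>
    ⟨ht.1.trans hs.1.le, hs.2⟩
  have hg_meas : AEStronglyMeasurable g (volume.restrict (Set.uIoc T₁ T)) := by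
    apply aestronglyMeasurable_of_tendsto_ae atTop
      (fun n => (intervalIntegrable_iff.mp (hφint n T₁ ⟨le_rfl, hT⟩)).aestronglyMeasurable)
    filter_upwards [ae_restrict_mem measurableSet_uIoc] with s hs
    rw [uIoc_of_le hT] at hs
    exact hgtend s (hIoc_sub T₁ ⟨le_rfl, hT⟩ hs)
  have hg_int : IntervalIntegrable g volume T₁ T := by
    rw [intervalIntegrable_iff]
    apply Integrable.mono (intervalIntegrable_iff.mp (hφint 0 T₁ ⟨le_rfl, hT⟩)) hg_meas
    filter_upwards [ae_restrict_mem measurableSet_uIoc] with s hs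
    rw [uIoc_of_le hT] at hs
    have hs' : s ∈ Icc T₁ T := hIoc_sub T₁ ⟨le_rfl, hT⟩ hs
    rw [Real.norm_eq_abs, Real.norm_eq_abs, abs_of_nonneg (hg_nonneg s hs'),
      abs_of_nonneg (hρnn s hs' 0)]
    exact hg_le s hs' 0
  have hg_int' : ∀ t ∈ Icc T₁ T, IntervalIntegrable g volume t T := by
    intro t ht
    apply hg_int.mono_set
    rw [uIcc_of_le ht.2, uIcc_of_le hT]
    exact Icc_subset_Icc ht.1 le_rfl
  -- the limit ψ satisfies ψ t = M ∫ₜᵀ g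
  have hψ_eq : ∀ t ∈ Icc T₁ T, ψ t = M * ∫ s in t..T, g s := by
    intro t ht
    have h1 : Tendsto (fun n => φ (n + 1) t) atTop (nhds (ψ t)) :=
      (htend t ht).comp (tendsto_add_atTop_nat 1)
    have h1' : Tendsto (fun n => M * ∫ s in t..T, ρ s (φ n s)) atTop (nhds (ψ t)) := by
      simpa only [hφsucc] using h1
    have h2 : Tendsto (fun n => M * ∫ s in t..T, ρ s (φ n s)) atTop
        (nhds (M * ∫ s in t..T, g s)) := by
      apply Tendsto.const_mul
      apply intervalIntegral.tendsto_integral_filter_of_dominated_convergence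
        (fun s => ρ s (φ 0 s))
      · exact Eventually.of_forall fun n =>
          (intervalIntegrable_iff.mp (hφint n t ht)).aestronglyMeasurable
      · refine Eventually.of_forall fun n => Eventually.of_forall fun x hx => ?_
        rw [uIoc_of_le ht.2] at hx
        have hx' : x ∈ Icc T₁ T := hIoc_sub t ht hx
        rw [Real.norm_eq_abs, abs_of_nonneg (hρnn x hx' n)]
        exact hρanti x hx' (Nat.zero_le n)
      · exact hφint 0 t ht
      · refine Eventually.of_forall fun x hx => ?_
        rw [uIoc_of_le ht.2] at hx
        exact hgtend x (hIoc_sub t ht hx)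
    exact tendsto_nhds_unique h1' h2
  -- where ψ is positive, g coincides with ρ(·, ψ ·)
  have hgψ : ∀ s ∈ Icc T₁ T, 0 < ψ s → g s = ρ s (ψ s) := by
    intro s hs hpos
    have hs0 := hIsub hs
    have hlow : ρ s (ψ s) ≤ g s :=
      le_ciInf fun n => hmono s hs0 (hψ_nonneg s hs) (hφnonneg n s hs) (hψ_le s hs n)
    have hup : ∀ n, ρ s (φ n s) ≤ (φ n s / ψ s) * ρ s (ψ s) := by
      intro n
      have hφpos : 0 < φ n s := lt_of_lt_of_le hpos (hψ_le s hs n)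
      have key : (ψ s / φ n s) • ρ s (φ n s) + (1 - ψ s / φ n s) • ρ s 0 ≤
          ρ s ((ψ s / φ n s) • φ n s + (1 - ψ s / φ n s) • (0 : ℝ)) :=
        (hconc s hs0).2 (mem_Ici.2 hφpos.le) (mem_Ici.2 le_rfl)
          (div_nonneg hpos.le hφpos.le)
          (by rw [sub_nonneg]; exact div_le_one_of_le₀ (hψ_le s hs n) hφpos.le)
          (by ring)
      simp only [smul_eq_mul, hzero s hs0, mul_zero, add_zero,
        div_mul_cancel₀ _ hφpos.ne'] at key
      calc ρ s (φ n s) = (φ n s / ψ s) * ((ψ s / φ n s) * ρ s (φ n s)) := by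
            field_simp
        _ ≤ (φ n s / ψ s) * ρ s (ψ s) :=
            mul_le_mul_of_nonneg_left key (by positivity)
    have hup_lim : Tendsto (fun n => (φ n s / ψ s) * ρ s (ψ s)) atTop (nhds (ρ s (ψ s))) := by
      have := ((htend s hs).div_const (ψ s)).mul_const (ρ s (ψ s))
      rwa [div_self hpos.ne', one_mul] at this
    have hupper : g s ≤ ρ s (ψ s) :=
      ge_of_tendsto hup_lim (Eventually.of_forall fun n => (hg_le s hs n).trans (hup n))
    linarith
  -- ψ is antitone on [T₁, T]
  have hψ_anti : ∀ t₁ ∈ Icc T₁ T, ∀ t₂ ∈ Icc T₁ T, t₁ ≤ t₂ → ψ t₂ ≤ ψ t₁ := by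
    intro t₁ h1 t₂ h2 h12
    rw [hψ_eq t₁ h1, hψ_eq t₂ h2]
    have hi12 : IntervalIntegrable g volume t₁ t₂ := by
      apply hg_int.mono_set
      rw [uIcc_of_le h12, uIcc_of_le hT]
      exact Icc_subset_Icc h1.1 h2.2
    have hsplit : (∫ s in t₁..t₂, g s) + ∫ s in t₂..T, g s = ∫ s in t₁..T, g s :=
      intervalIntegral.integral_add_adjacent_intervals hi12 (hg_int' t₂ h2)
    have hnn : 0 ≤ ∫ s in t₁..t₂, g s :=
      intervalIntegral.integral_nonneg h12 fun u hu =>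
        hg_nonneg u ⟨h1.1.trans hu.1, hu.2.trans h2.2⟩
    nlinarith [mul_nonneg hM.le hnn]
  have hTmem : T ∈ Icc T₁ T := ⟨hT, le_rfl⟩
  have hψT : ψ T = 0 := by
    refine le_antisymm ?_ (hψ_nonneg T hTmem)
    have := hψ_le T hTmem 1
    rwa [hφsucc 0 T, intervalIntegral.integral_same, mul_zero] at this
  -- the first vanishing time
  set Z : Set ℝ := {s | s ∈ Icc T₁ T ∧ ψ s = 0} with hZdef
  have hZT : T ∈ Z := ⟨hTmem, hψT⟩
  have hZbdd : BddBelow Z := ⟨T₁, fun z hz => hz.1.1⟩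
  set t₀ : ℝ := sInf Z with ht₀def
  have ht₀I : t₀ ∈ Icc T₁ T :=
    ⟨le_csInf ⟨T, hZT⟩ fun z hz => hz.1.1, csInf_le hZbdd hZT⟩
  have hψpos : ∀ s ∈ Icc T₁ T, s < t₀ → 0 < ψ s := by
    intro s hs hlt
    rcases (hψ_nonneg s hs).lt_or_eq with h | h
    · exact h
    · exact absurd (csInf_le hZbdd ⟨hs, h.symm⟩) (not_le.2 hlt)
  have hψzero' : ∀ s ∈ Icc T₁ T, t₀ < s → ψ s = 0 := by
    intro s hs hlt
    obtain ⟨z, hz, hzs⟩ := exists_lt_of_csInf_lt ⟨T, hZT⟩ hlt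
    have := hψ_anti z hz.1 s hs hzs.le
    have h0 := hψ_nonneg s hs
    linarith [hz.2]
  -- g vanishes a.e. on (t₀, T]
  have hae_zero : ∀ᵐ s, s ∈ Ioc t₀ T → g s = 0 := by
    rcases eq_or_lt_of_le ht₀I.2 with h | h
    · refine Eventually.of_forall fun s hs => absurd hs ?_
      rw [h]; simp
    · set r : ℕ → ℝ := fun n => t₀ + (T - t₀) / (n + 1) with hrdef
      have hr_gt : ∀ n, t₀ < r n := by
        intro n
        have : 0 < (T - t₀) / (n + 1) := div_pos (by linarith) (by positivity)
        simp only [hrdef]; linarith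
      have hr_mem : ∀ n, r n ∈ Icc T₁ T := by
        intro n
        refine ⟨ht₀I.1.trans (hr_gt n).le, ?_⟩
        have : (T - t₀) / (n + 1) ≤ T - t₀ :=
          div_le_self (by linarith) (by exact_mod_cast Nat.le_add_left 1 n)
        simp only [hrdef]; linarith
      have hzero_n : ∀ n, ∀ᵐ s, s ∈ Ioc (r n) T → g s = 0 := by
        intro n
        have hrT : r n ≤ T := (hr_mem n).2
        have hint : ∫ s in Ioc (r n) T, g s = 0 := by
          have heq := hψ_eq (r n) (hr_mem n)
          rw [hψzero' (r n) (hr_mem n) (hr_gt n)] at heq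
          have h2 : ∫ s in (r n)..T, g s = 0 := by
            rcases mul_eq_zero.1 heq.symm with h | h
            · exact absurd h hM.ne'
            · exact h
          rwa [intervalIntegral.integral_of_le hrT] at h2
        have hnnae : 0 ≤ᵐ[volume.restrict (Ioc (r n) T)] g := by
          filter_upwards [ae_restrict_mem measurableSet_Ioc] with s hs
          exact hg_nonneg s (hIoc_sub (r n) (hr_mem n) hs)
        have hion : IntegrableOn g (Ioc (r n) T) volume :=
          (intervalIntegrable_iff_integrableOn_Ioc_of_le hrT).mp (hg_int' (r n) (hr_mem n))
        have := (MeasureTheory.setIntegral_eq_zero_iff_of_nonneg_ae hnnae hion).1 hint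
        rw [Filter.EventuallyEq, ae_restrict_iff' measurableSet_Ioc] at this
        exact this
      have hall : ∀ᵐ s, ∀ n, s ∈ Ioc (r n) T → g s = 0 := ae_all_iff.2 hzero_n
      filter_upwards [hall] with s hs hmem
      have hst : t₀ < s := hmem.1
      obtain ⟨n, hn⟩ := exists_nat_gt ((T - t₀) / (s - t₀))
      have hspos : 0 < s - t₀ := by linarith
      have hlt : r n < s := by
        have h1 : (T - t₀) / (s - t₀) < (n : ℝ) + 1 := hn.trans (by linarith)
        rw [div_lt_iff₀ hspos] at h1
        have h2 : (T - t₀) / ((n : ℝ) + 1) < s - t₀ := by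
          rw [div_lt_iff₀ (by positivity)]
          nlinarith
        simp only [hrdef]; linarith
      exact hs n ⟨hlt, hmem.2⟩
  -- a.e. identification of g with ρ(·, ψ ·) on (T₁, T]
  have hne : ∀ᵐ s : ℝ, s ≠ t₀ := by
    rw [ae_iff]
    simp only [not_ne_iff, setOf_eq_eq_singleton]
    exact measure_singleton t₀
  have hae_eq : ∀ᵐ s, s ∈ Ioc T₁ T → g s = ρ s (ψ s) := by
    filter_upwards [hae_zero, hne] with s hsz hsne hmem
    have hs' : s ∈ Icc T₁ T := Ioc_subset_Icc_self hmem
    rcases lt_trichotomy s t₀ with h | h | h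
    · exact hgψ s hs' (hψpos s hs' h)
    · exact absurd h hsne
    · rw [hψzero' s hs' h, hzero s (hIsub hs'), hsz ⟨h, hmem.2⟩]
  -- ψ satisfies the integral equation
  have hψ_eq2 : ∀ t ∈ Icc T₁ T, ψ t = M * ∫ s in t..T, ρ s (ψ s) := by
    intro t ht
    rw [hψ_eq t ht]
    congr 1
    apply intervalIntegral.integral_congr_ae
    filter_upwards [hae_eq] with s hs hmem
    rw [uIoc_of_le ht.2] at hmem
    exact hs ⟨lt_of_le_of_lt ht.1 hmem.1, hmem.2⟩
  exact ⟨ψ, htend, hψ_eq2, huniq' ψ hψ_nonneg hψ_eq2⟩
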